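/- Suppose G = 0 and D > 0. If H > 0 and Γ > 0 satisfy the quadratic equation Γσ'(Γ)H² − 2(D + Γσ'(Γ)H*)H + 2DH* = 0 with σ'(Γ) < 0, then H is uniquely determined and equals (D + Γσ'(Γ)H* − √(D² + (Γσ'(Γ)H*)²)) / (Γσ'(Γ)); moreover this value satisfies H* < H < 2H*. -/
import Mathlib


open Set

/-- The quadratic for H (case G = 0, D > 0) has a unique positive root,
which lies strictly between H* and 2H*. -/
theorem stmt_4 (D Hstar Γ sp H : ℝ)
    (hD : 0 < D) (hHstar : 0 < Hstar) (hΓ : Γ ∈ Ioo (0:ℝ) 1)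
    (hsp : sp < 0) (hHpos : 0 < H)
    (hquad : Γ * sp * H^2 - 2 * (D + Γ * sp * Hstar) * H + 2 * D * Hstar = 0) :
    H = (D + Γ * sp * Hstar - Real.sqrt (D^2 + (Γ * sp * Hstar)^2)) / (Γ * sp) ∧
      Hstar < H ∧ H < 2 * Hstar := by
  have haneg : Γ * sp < 0 := mul_neg_of_pos_of_neg hΓ.1 hsp
  set s := Real.sqrt (D^2 + (Γ * sp * Hstar)^2) with hsdef
  have hsnn : 0 ≤ s := Real.sqrt_nonneg _
  have hs2 : s^2 = D^2 + (Γ * sp * Hstar)^2 := Real.sq_sqrt (by positivity)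
  have haHs : Γ * sp * Hstar < 0 := mul_neg_of_neg_of_pos haneg hHstar
  have hsD : D < s := by
    rw [Real.lt_sqrt hD.le]
    nlinarith
  have hs_lt : s < D - Γ * sp * Hstar := by
    rw [Real.sqrt_lt' (by nlinarith)]
    nlinarith
  have hpos2 : 0 < D + Γ * sp * Hstar + s := by nlinarith
  have hfac : (Γ * sp * H - (D + Γ * sp * Hstar - s)) *
      (Γ * sp * H - (D + Γ * sp * Hstar + s)) = 0 := by
    linear_combination (Γ * sp) * hquad - hs2
  have hne : Γ * sp * H - (D + Γ * sp * Hstar + s) ≠ 0 := by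
    have : Γ * sp * H < 0 := mul_neg_of_neg_of_pos haneg hHpos
    nlinarith
  have h1 : Γ * sp * H = D + Γ * sp * Hstar - s := by
    rcases mul_eq_zero.mp hfac with h | h
    · linarith
    · exact absurd h hne
  refine ⟨?_, ?_, ?_⟩
  · rw [eq_div_iff (ne_of_lt haneg)]
    linarith [h1]
  · nlinarith [h1, hsD, haneg]
  · nlinarith [h1, hs_lt, haneg]
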